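/- arXiv:2401.11741 — 2 statements merged into one kernel-verified Lean document; each statement's English description precedes it below -/
import Mathlib

section
/- Let n ≥ 1, let S_n be the star graph on vertices {0,1,...,n-1}, and let M be one of PsEnd(S_n), PswEnd(S_n), IEnd(S_n), PEnd(S_n), PwEnd(S_n). For α, β ∈ M, α J β in M (Green's J-relation) if and only if one of the following holds: (1) |im(α)| = |im(β)| ≤ 1; (2) |im(α)| = |im(β)| ≥ 2, (0 ∈ dom(α) iff 0 ∈ dom(β)), and (0 ∈ im(α) iff 0 ∈ im(β)). -/
def pmul {V : Type*} (f g : V → Option V) : V → Option V := fun x => (f x).bind g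

def pdom {V : Type*} (f : V → Option V) : Set V := {x | f x ≠ none}

def pim {V : Type*} (f : V → Option V) : Set V := {y | ∃ x, f x = some y}

def pker {V : Type*} (f : V → Option V) : V → V → Prop := fun x y => f x ≠ none ∧ f x = f y

def PInj {V : Type*} (f : V → Option V) : Prop := ∀ u v a, f u = some a → f v = some a → u = v

def edge {n : ℕ} (u v : Fin n) : Prop := (u.val = 0 ∧ v.val ≠ 0) ∨ (v.val = 0 ∧ u.val ≠ 0)

def IsPEnd {n : ℕ} (α : Fin n → Option (Fin n)) : Prop :=
  ∀ u v a b, α u = some a → α v = some b → edge u v → edge a b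

def IsPwEnd {n : ℕ} (α : Fin n → Option (Fin n)) : Prop :=
  ∀ u v a b, α u = some a → α v = some b → edge u v → a ≠ b → edge a b

def IsPsEnd {n : ℕ} (α : Fin n → Option (Fin n)) : Prop :=
  ∀ u v a b, α u = some a → α v = some b → (edge u v ↔ edge a b)

def IsPswEnd {n : ℕ} (α : Fin n → Option (Fin n)) : Prop :=
  ∀ u v a b, α u = some a → α v = some b → ((edge u v ∧ a ≠ b) ↔ edge a b)

def PEndS (n : ℕ) : Set (Fin n → Option (Fin n)) := {α | IsPEnd α}
def PwEndS (n : ℕ) : Set (Fin n → Option (Fin n)) := {α | IsPwEnd α}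
def PsEndS (n : ℕ) : Set (Fin n → Option (Fin n)) := {α | IsPsEnd α}
def PswEndS (n : ℕ) : Set (Fin n → Option (Fin n)) := {α | IsPswEnd α}
def IEndS (n : ℕ) : Set (Fin n → Option (Fin n)) := {α | PInj α ∧ IsPEnd α}
def PAutS (n : ℕ) : Set (Fin n → Option (Fin n)) := {α | PInj α ∧ IsPsEnd α}

def RegularIn {V : Type*} (M : Set (V → Option V)) (a : V → Option V) : Prop :=
  ∃ b ∈ M, pmul (pmul a b) a = a

def GreenL {V : Type*} (M : Set (V → Option V)) (a b : V → Option V) : Prop :=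
  (∃ g ∈ M, a = pmul g b) ∧ (∃ g ∈ M, b = pmul g a)

def GreenR {V : Type*} (M : Set (V → Option V)) (a b : V → Option V) : Prop :=
  (∃ g ∈ M, a = pmul b g) ∧ (∃ g ∈ M, b = pmul a g)

def GreenH {V : Type*} (M : Set (V → Option V)) (a b : V → Option V) : Prop :=
  GreenL M a b ∧ GreenR M a b

def GreenJ {V : Type*} (M : Set (V → Option V)) (a b : V → Option V) : Prop :=
  (∃ g ∈ M, ∃ h ∈ M, a = pmul (pmul g b) h) ∧ (∃ g ∈ M, ∃ h ∈ M, b = pmul (pmul g a) h)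

lemma edge_iff {n : ℕ} (z : Fin n) (hz : z.val = 0) (u v : Fin n) :
    edge u v ↔ ((u = z ∧ v ≠ z) ∨ (v = z ∧ u ≠ z)) := by
  have h : ∀ w : Fin n, w.val = 0 ↔ w = z :=
    fun w => ⟨fun h => Fin.ext (h.trans hz.symm), fun h => h ▸ hz⟩
  unfold edge
  simp only [ne_eq, h]

lemma edge_irrefl {n : ℕ} (u : Fin n) : ¬ edge u u := by
  rintro (⟨h1, h2⟩ | ⟨h1, h2⟩) <;> exact h2 h1

lemma pw_of_mem {n : ℕ} {M : Set (Fin n → Option (Fin n))}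
    (hM : M = PsEndS n ∨ M = PswEndS n ∨ M = IEndS n ∨ M = PEndS n ∨ M = PwEndS n)
    {γ : Fin n → Option (Fin n)} (hγ : γ ∈ M) : IsPwEnd γ := by
  rcases hM with rfl | rfl | rfl | rfl | rfl
  · exact fun u v a b hu hv he _ => (hγ u v a b hu hv).mp he
  · exact fun u v a b hu hv he hne => (hγ u v a b hu hv).mp ⟨he, hne⟩
  · exact fun u v a b hu hv he _ => hγ.2 u v a b hu hv he
  · exact fun u v a b hu hv he _ => hγ u v a b hu hv he
  · exact hγ

lemma strong_mem {n : ℕ} {M : Set (Fin n → Option (Fin n))}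
    (hM : M = PsEndS n ∨ M = PswEndS n ∨ M = IEndS n ∨ M = PEndS n ∨ M = PwEndS n)
    {γ : Fin n → Option (Fin n)} (h1 : PInj γ) (h2 : IsPsEnd γ) : γ ∈ M := by
  have hPE : IsPEnd γ := fun u v a b hu hv he => (h2 u v a b hu hv).mp he
  rcases hM with rfl | rfl | rfl | rfl | rfl
  · exact h2
  · intro u v a b hu hv
    constructor
    · rintro ⟨he, _⟩; exact (h2 u v a b hu hv).mp he
    · intro he
      refine ⟨(h2 u v a b hu hv).mpr he, ?_⟩
      rintro rfl; exact edge_irrefl _ he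
  · exact ⟨h1, hPE⟩
  · exact hPE
  · exact fun u v a b hu hv he _ => hPE u v a b hu hv he

lemma chain_full {n : ℕ} {g β h α : Fin n → Option (Fin n)}
    (heq : α = pmul (pmul g β) h) :
    ∀ x a, α x = some a → ∃ wv m, g x = some wv ∧ β wv = some m ∧ h m = some a := by
  intro x a hx
  rw [heq] at hx
  simp only [pmul] at hx
  rcases hg : g x with _ | wv
  · rw [hg] at hx; simp at hx
  · rw [hg] at hx
    simp only [Option.bind_some] at hx
    rcases hb : β wv with _ | m
    · rw [hb] at hx; simp at hx
    · rw [hb] at hx; simp only [Option.bind_some] at hx; exact ⟨wv, m, rfl, hb, hx⟩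

lemma chain_ex {n : ℕ} {g β h α : Fin n → Option (Fin n)}
    (heq : α = pmul (pmul g β) h) :
    ∀ a ∈ pim α, ∃ m, m ∈ pim β ∧ h m = some a := by
  rintro a ⟨x, hx⟩
  obtain ⟨wv, m, _, hb, hh⟩ := chain_full heq x a hx
  exact ⟨m, ⟨wv, hb⟩, hh⟩

lemma prank_le {n : ℕ} {g β h α : Fin n → Option (Fin n)}
    (heq : α = pmul (pmul g β) h) : (pim α).ncard ≤ (pim β).ncard := by
  classical
  have key := chain_ex heq
  set f : Fin n → Fin n := fun a => if ha : a ∈ pim α then (key a ha).choose else a with hf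
  refine Set.ncard_le_ncard_of_injOn f ?_ ?_ (Set.toFinite _)
  · intro a ha
    simp only [hf, dif_pos ha]
    exact (key a ha).choose_spec.1
  · intro a ha a' ha' hEq
    simp only [hf, dif_pos ha, dif_pos ha'] at hEq
    have h1 := (key a ha).choose_spec.2
    have h2 := (key a' ha').choose_spec.2
    rw [hEq, h2] at h1
    exact (Option.some_injective _ h1.symm)

lemma F_dom {n : ℕ} (z : Fin n) (hz : z.val = 0) {g β h α : Fin n → Option (Fin n)}
    (hg : IsPwEnd g) (heq : α = pmul (pmul g β) h) (h2 : 2 ≤ (pim α).ncard)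
    (hda : α z ≠ none) : β z ≠ none := by
  intro hbz
  obtain ⟨a₁, ha₁, a₂, ha₂, hane⟩ :=
    (Set.one_lt_ncard (Set.toFinite _)).mp (lt_of_lt_of_le one_lt_two h2)
  obtain ⟨x₁, hx₁⟩ := ha₁
  obtain ⟨x₂, hx₂⟩ := ha₂
  rcases ha0 : α z with _ | a₀
  · exact hda ha0
  obtain ⟨w₀, m₀, hgw₀, hbm₀, _⟩ := chain_full heq z a₀ ha0
  have hw : ∀ x w m, g x = some w → β w = some m → w = w₀ := by
    intro x w m hgx hbw
    by_cases hxz : x = z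
    · subst hxz; rw [hgw₀] at hgx; exact (Option.some_injective _ hgx).symm
    · by_contra hne'
      have hedge : edge z x := (edge_iff z hz z x).mpr (Or.inl ⟨rfl, hxz⟩)
      have he2 := hg z x w₀ w hgw₀ hgx hedge (fun hEq => hne' hEq.symm)
      rcases (edge_iff z hz w₀ w).mp he2 with ⟨h1, _⟩ | ⟨h1, _⟩
      · rw [h1] at hbm₀; rw [hbz] at hbm₀; exact nomatch hbm₀
      · rw [h1] at hbw; rw [hbz] at hbw; exact nomatch hbw
  obtain ⟨w₁, m₁, hgw₁, hbm₁, hhm₁⟩ := chain_full heq x₁ a₁ hx₁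
  obtain ⟨w₂, m₂, hgw₂, hbm₂, hhm₂⟩ := chain_full heq x₂ a₂ hx₂
  have e1 := hw x₁ w₁ m₁ hgw₁ hbm₁
  have e2 := hw x₂ w₂ m₂ hgw₂ hbm₂
  rw [e1] at hbm₁; rw [e2] at hbm₂
  rw [hbm₂] at hbm₁
  have : m₁ = m₂ := Option.some_injective _ hbm₁.symm
  rw [this, hhm₂] at hhm₁
  exact hane (Option.some_injective _ hhm₁.symm)

lemma F_im {n : ℕ} (z : Fin n) (hz : z.val = 0) {g β h α : Fin n → Option (Fin n)}
    (hh : IsPwEnd h) (heq : α = pmul (pmul g β) h) (hcard : (pim β).ncard ≤ (pim α).ncard)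
    (h2 : 2 ≤ (pim α).ncard) (hzb : z ∈ pim β) : z ∈ pim α := by
  classical
  have key := chain_ex heq
  set f : Fin n → Fin n := fun a => if ha : a ∈ pim α then (key a ha).choose else a with hf
  have hmaps : ∀ a ∈ pim α, f a ∈ pim β := by
    intro a ha; simp only [hf, dif_pos ha]; exact (key a ha).choose_spec.1
  have hinj : Set.InjOn f (pim α) := by
    intro a ha a' ha' hEq
    simp only [hf, dif_pos ha, dif_pos ha'] at hEq
    have h1 := (key a ha).choose_spec.2
    have h2' := (key a' ha').choose_spec.2
    rw [hEq, h2'] at h1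
    exact (Option.some_injective _ h1.symm)
  have himg : f '' (pim α) = pim β := by
    refine Set.eq_of_subset_of_ncard_le ?_ ?_ (Set.toFinite _)
    · rintro _ ⟨a, ha, rfl⟩; exact hmaps a ha
    · rw [Set.ncard_image_of_injOn hinj]; exact hcard
  obtain ⟨a, ha, hfa⟩ := himg.symm ▸ hzb
  have hha : h z = some a := by
    have := (key a ha).choose_spec.2
    rw [show (key a ha).choose = f a by simp only [hf, dif_pos ha], hfa] at this
    exact this
  by_cases haz : a = z
  · rwa [← haz]
  · obtain ⟨p, hp, q, hq, hpq⟩ := (Set.one_lt_ncard (Set.toFinite _)).mp (lt_of_lt_of_le one_lt_two h2)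
    have ⟨a₁, ha₁, hane⟩ : ∃ a₁, a₁ ∈ pim α ∧ a₁ ≠ a := by
      by_cases hpa : p = a
      · exact ⟨q, hq, fun hqa => hpq (by rw [hpa, hqa])⟩
      · exact ⟨p, hp, hpa⟩
    have hm₁ : f a₁ ∈ pim β := hmaps a₁ ha₁
    have hhm₁ : h (f a₁) = some a₁ := by
      have := (key a₁ ha₁).choose_spec.2
      rwa [show (key a₁ ha₁).choose = f a₁ by simp only [hf, dif_pos ha₁]] at this
    have hm₁z : f a₁ ≠ z := by
      intro hEq; rw [hEq, hha] at hhm₁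
      exact hane (Option.some_injective _ hhm₁.symm)
    have hedge : edge z (f a₁) := (edge_iff z hz _ _).mpr (Or.inl ⟨rfl, fun hh' => hm₁z hh'⟩)
    have he2 := hh z (f a₁) a a₁ hha hhm₁ hedge (fun hEq => hane hEq.symm)
    rcases (edge_iff z hz a a₁).mp he2 with ⟨h1, _⟩ | ⟨h1, _⟩
    · rw [← h1]; exact ha
    · rw [← h1]; exact ha₁


lemma xor_congr {A B A' B' : Prop} (h1 : A' ↔ A) (h2 : B' ↔ B) :
    ((A ∧ ¬ B) ∨ (B ∧ ¬ A)) ↔ ((A' ∧ ¬ B') ∨ (B' ∧ ¬ A')) := by tauto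

lemma xor_congr_neg {A B A' B' : Prop} (h1 : A' ↔ ¬ A) (h2 : B' ↔ ¬ B) :
    ((A ∧ ¬ B) ∨ (B ∧ ¬ A)) ↔ ((A' ∧ ¬ B') ∨ (B' ∧ ¬ A')) := by tauto

set_option maxHeartbeats 4000000 in
lemma construct17 {n : ℕ} (z : Fin n) (hz : z.val = 0) {M : Set (Fin n → Option (Fin n))}
    (hM : M = PsEndS n ∨ M = PswEndS n ∨ M = IEndS n ∨ M = PEndS n ∨ M = PwEndS n)
    {α β : Fin n → Option (Fin n)} (hα : α ∈ M) (hβ : β ∈ M)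
    (hcard : (pim α).ncard = (pim β).ncard)
    (hflags : 2 ≤ (pim α).ncard →
      ((z ∈ pdom α ↔ z ∈ pdom β) ∧ (z ∈ pim α ↔ z ∈ pim β))) :
    ∃ g ∈ M, ∃ h ∈ M, α = pmul (pmul g β) h := by
  classical
  rcases Nat.lt_or_ge (pim α).ncard 2 with hlt | h2
  · have h01 : (pim α).ncard = 0 ∨ (pim α).ncard = 1 := by omega
    rcases h01 with h0 | h1
    · -- rank 0
      have hA : pim α = ∅ := (Set.ncard_eq_zero (Set.toFinite _)).mp h0
      have hα0 : ∀ x, α x = none := by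
        intro x
        rcases hax : α x with _ | p
        · rfl
        · exact absurd (hA ▸ (⟨x, hax⟩ : p ∈ pim α)) (Set.notMem_empty p)
      refine ⟨(fun _ => none), ?_, (fun _ => none), ?_, ?_⟩
      · exact strong_mem hM (fun u v a hu _ => by simp at hu)
          (fun u v a b hu _ => by simp at hu)
      · exact strong_mem hM (fun u v a hu _ => by simp at hu)
          (fun u v a b hu _ => by simp at hu)
      · funext x; simp [pmul, hα0 x]
    · -- rank 1
      obtain ⟨a, hA⟩ := Set.ncard_eq_one.mp h1
      obtain ⟨b, hB⟩ := Set.ncard_eq_one.mp (hcard ▸ h1)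
      have hbB : b ∈ pim β := by rw [hB]; exact Set.mem_singleton b
      obtain ⟨y, hy⟩ := hbB
      set t1 : Fin n → Option (Fin n) := fun x => if x = a then some y else none with ht1
      set h1f : Fin n → Option (Fin n) := fun x => if x = b then some a else none with hh1
      have ht1spec : ∀ u c, t1 u = some c → u = a ∧ c = y := by
        intro u c hu
        simp only [ht1] at hu
        by_cases hua : u = a
        · rw [if_pos hua] at hu; exact ⟨hua, (Option.some_injective _ hu).symm⟩
        · rw [if_neg hua] at hu; exact nomatch hu
      have hh1spec : ∀ u c, h1f u = some c → u = b ∧ c = a := by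
        intro u c hu
        simp only [hh1] at hu
        by_cases hub : u = b
        · rw [if_pos hub] at hu; exact ⟨hub, (Option.some_injective _ hu).symm⟩
        · rw [if_neg hub] at hu; exact nomatch hu
      have hgch : ∀ u c, pmul α t1 u = some c → α u = some a ∧ c = y := by
        intro u c hu
        simp only [pmul] at hu
        rcases hax : α u with _ | p
        · rw [hax] at hu; simp at hu
        · rw [hax] at hu
          simp only [Option.bind_some] at hu
          obtain ⟨hpa, hcy⟩ := ht1spec p c hu
          exact ⟨congrArg some hpa, hcy⟩
      refine ⟨pmul α t1, ?_, h1f, ?_, ?_⟩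
      · rcases hM with rfl | rfl | rfl | rfl | rfl
        · intro u v c d hu hv
          obtain ⟨hau, rfl⟩ := hgch u c hu
          obtain ⟨hav, rfl⟩ := hgch v d hv
          exact iff_of_false (fun he => edge_irrefl a ((hα u v a a hau hav).mp he))
            (edge_irrefl _)
        · intro u v c d hu hv
          obtain ⟨hau, rfl⟩ := hgch u c hu
          obtain ⟨hav, rfl⟩ := hgch v d hv
          exact iff_of_false (fun he => he.2 rfl) (edge_irrefl _)
        · constructor
          · intro u v c hu hv
            obtain ⟨hau, _⟩ := hgch u c hu
            obtain ⟨hav, _⟩ := hgch v c hv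
            exact hα.1 u v a hau hav
          · intro u v c d hu hv he
            obtain ⟨hau, rfl⟩ := hgch u c hu
            obtain ⟨hav, rfl⟩ := hgch v d hv
            exact absurd (hα.2 u v a a hau hav he) (edge_irrefl a)
        · intro u v c d hu hv he
          obtain ⟨hau, rfl⟩ := hgch u c hu
          obtain ⟨hav, rfl⟩ := hgch v d hv
          exact absurd (hα u v a a hau hav he) (edge_irrefl a)
        · intro u v c d hu hv he hne
          obtain ⟨hau, rfl⟩ := hgch u c hu
          obtain ⟨hav, rfl⟩ := hgch v d hv
          exact absurd rfl hne
      · refine strong_mem hM ?_ ?_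
        · intro u v c hu hv
          obtain ⟨hub, _⟩ := hh1spec u c hu
          obtain ⟨hvb, _⟩ := hh1spec v c hv
          rw [hub, hvb]
        · intro u v c d hu hv
          obtain ⟨hub, hca⟩ := hh1spec u c hu
          obtain ⟨hvb, hda⟩ := hh1spec v d hv
          subst hub; subst hvb; subst hca; subst hda
          exact iff_of_false (edge_irrefl _) (edge_irrefl _)
      · funext x
        simp only [pmul]
        rcases hax : α x with _ | p
        · rfl
        · have hp : p ∈ pim α := ⟨x, hax⟩
          rw [hA] at hp
          have hpa : p = a := Set.eq_of_mem_singleton hp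
          subst hpa
          simp [ht1, hh1, hy]
  · -- rank ≥ 2
    obtain ⟨hdom, him⟩ := hflags h2
    have h2b : 2 ≤ (pim β).ncard := hcard ▸ h2
    have hencard : (pim α \ {z}).encard = (pim β \ {z}).encard := by
      have hAB : (pim α).encard = (pim β).encard := by
        rw [← (Set.toFinite (pim α)).cast_ncard_eq, ← (Set.toFinite (pim β)).cast_ncard_eq,
          hcard]
      by_cases hzA : z ∈ pim α
      · rw [Set.encard_diff_singleton_of_mem hzA,
          Set.encard_diff_singleton_of_mem (him.mp hzA), hAB]
      · rw [Set.diff_singleton_eq_self hzA,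
          Set.diff_singleton_eq_self (fun hh => hzA (him.mpr hh)), hAB]
    haveI : Nonempty (Fin n) := ⟨z⟩
    obtain ⟨f, hfbij⟩ := Set.Finite.exists_bijOn_of_encard_eq (Set.toFinite _) hencard
    obtain ⟨φ, φi, hφmem, hφz, hφi, hφiA⟩ :
        ∃ φ φi : Fin n → Fin n,
          (∀ a ∈ pim α, φ a ∈ pim β) ∧
          (∀ a ∈ pim α, (φ a = z ↔ a = z)) ∧
          (∀ a ∈ pim α, φi (φ a) = a) ∧
          (∀ b ∈ pim β, φi b ∈ pim α ∧ φ (φi b) = b ∧ (φi b = z ↔ b = z)) := by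
      classical
      refine ⟨fun a => if a = z then z else f a,
        fun b => if hb : b ∈ pim β \ {z} then (hfbij.surjOn hb).choose else z,
        ?_, ?_, ?_, ?_⟩
      · intro a ha
        beta_reduce
        by_cases haz : a = z
        · rw [if_pos haz]; exact him.mp (haz ▸ ha)
        · rw [if_neg haz]; exact (hfbij.mapsTo ⟨ha, haz⟩).1
      · intro a ha
        beta_reduce
        by_cases haz : a = z
        · rw [if_pos haz]; exact iff_of_true rfl haz
        · rw [if_neg haz]; exact iff_of_false (hfbij.mapsTo ⟨ha, haz⟩).2 haz
      · intro a ha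
        beta_reduce
        by_cases haz : a = z
        · rw [if_pos haz]
          rw [dif_neg (fun hh => hh.2 rfl)]
          exact haz.symm
        · rw [if_neg haz]
          have hfa : f a ∈ pim β \ {z} := hfbij.mapsTo ⟨ha, haz⟩
          rw [dif_pos hfa]
          have hspec := (hfbij.surjOn hfa).choose_spec
          exact hfbij.injOn hspec.1 ⟨ha, haz⟩ hspec.2
      · intro b hb
        beta_reduce
        by_cases hbz : b = z
        · rw [dif_neg (fun hh => hh.2 hbz)]
          refine ⟨him.mpr (hbz ▸ hb), ?_, iff_of_true rfl hbz⟩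
          rw [if_pos rfl]; exact hbz.symm
        · have hb' : b ∈ pim β \ {z} := ⟨hb, hbz⟩
          rw [dif_pos hb']
          have hspec := (hfbij.surjOn hb').choose_spec
          refine ⟨hspec.1.1, ?_, iff_of_false hspec.1.2 hbz⟩
          have hcz : ¬ (hfbij.surjOn hb').choose = z := fun hh => hspec.1.2 hh
          rw [if_neg hcz]
          exact hspec.2
    obtain ⟨w, hwb, hwz⟩ :
        ∃ w : Fin n → Fin n,
          (∀ b ∈ pim β, β (w b) = some b) ∧
          (∀ b ∈ pim β, (w b = z ↔ β z = some b)) := by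
      classical
      refine ⟨fun b => if β z = some b then z
        else if hb : b ∈ pim β then (show ∃ x, β x = some b from hb).choose else z, ?_, ?_⟩
      · intro b hb
        beta_reduce
        by_cases h1 : β z = some b
        · rw [if_pos h1]; exact h1
        · rw [if_neg h1, dif_pos hb]
          exact (show ∃ x, β x = some b from hb).choose_spec
      · intro b hb
        beta_reduce
        constructor
        · intro hwbz
          by_cases h1 : β z = some b
          · exact h1
          · rw [if_neg h1, dif_pos hb] at hwbz
            have := (show ∃ x, β x = some b from hb).choose_spec
            rwa [hwbz] at this
        · intro h1; rw [if_pos h1]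
    obtain ⟨t, htnone, htsome⟩ :
        ∃ t : Fin n → Option (Fin n),
          (∀ a, a ∉ pim α → t a = none) ∧
          (∀ a ∈ pim α, t a = some (w (φ a))) := by
      classical
      exact ⟨fun a => if a ∈ pim α then some (w (φ a)) else none,
        fun a ha => if_neg ha, fun a ha => if_pos ha⟩
    obtain ⟨hmap, hmnone, hmsome⟩ :
        ∃ hm : Fin n → Option (Fin n),
          (∀ b, b ∉ pim β → hm b = none) ∧
          (∀ b ∈ pim β, hm b = some (φi b)) := by
      classical
      exact ⟨fun b => if b ∈ pim β then some (φi b) else none,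
        fun b hb => if_neg hb, fun b hb => if_pos hb⟩
    have hgchain : ∀ u c, pmul α t u = some c →
        ∃ p, α u = some p ∧ p ∈ pim α ∧ c = w (φ p) := by
      intro u c hu
      simp only [pmul] at hu
      rcases hax : α u with _ | p
      · rw [hax] at hu; simp at hu
      · rw [hax] at hu
        rw [Option.bind_some] at hu
        have hp : p ∈ pim α := ⟨u, hax⟩
        rw [htsome p hp] at hu
        exact ⟨p, rfl, hp, (Option.some_injective _ hu).symm⟩
    have hwinj : ∀ p ∈ pim α, ∀ q ∈ pim α, w (φ p) = w (φ q) → p = q := by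
      intro p hp q hq hEq
      have h1 := hwb _ (hφmem p hp)
      have h2' := hwb _ (hφmem q hq)
      rw [hEq, h2'] at h1
      have hpq : φ q = φ p := Option.some_injective _ h1
      have h3 := congrArg φi hpq
      rw [hφi p hp, hφi q hq] at h3
      exact h3.symm
    have hdz_of : ∀ {u : Fin n} {p : Fin n}, α u = some p → u = z → z ∈ pdom α := by
      intro u p hup huz
      show α z ≠ none
      rw [← huz, hup]; simp
    have hbnotz : z ∉ pdom α → ∀ p ∈ pim α, w (φ p) ≠ z := by
      intro hdz p hp hEq
      have hdzb : z ∉ pdom β := fun hh => hdz (hdom.mpr hh)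
      have hbw := hwb _ (hφmem p hp)
      rw [hEq] at hbw
      exact hdzb (show β z ≠ none by rw [hbw]; simp)
    have htz : z ∈ pdom α → ∀ p ∈ pim α, ∀ q ∈ pim α,
        (edge p q ↔ edge (w (φ p)) (w (φ q))) := by
      intro hdz p hp q hq
      have hdzb : z ∈ pdom β := hdom.mp hdz
      rcases hb0 : β z with _ | v₀
      · exact absurd hb0 hdzb
      by_cases hv : v₀ = z
      · have key : ∀ r ∈ pim α, (w (φ r) = z ↔ r = z) := by
          intro r hr
          rw [hwz _ (hφmem r hr), hb0]
          constructor
          · intro hsome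
            have h1' : φ r = v₀ := Option.some_injective _ hsome.symm
            exact (hφz r hr).mp (by rw [h1', hv])
          · intro hrz
            have h1' : φ r = z := (hφz r hr).mpr hrz
            rw [h1', hv]
        rw [edge_iff z hz p q, edge_iff z hz (w (φ p)) (w (φ q))]
        exact xor_congr (key p hp) (key q hq)
      · have hPwβ : IsPwEnd β := pw_of_mem hM hβ
        have hBsub : ∀ r ∈ pim β, r = v₀ ∨ r = z := by
          rintro r ⟨x, hx⟩
          by_cases hxz : x = z
          · subst hxz; rw [hb0] at hx; exact Or.inl (Option.some_injective _ hx.symm)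
          · by_cases hrv : r = v₀
            · exact Or.inl hrv
            · have hedge : edge z x := (edge_iff z hz z x).mpr (Or.inl ⟨rfl, hxz⟩)
              have he2 := hPwβ z x v₀ r hb0 hx hedge (fun hEq => hrv hEq.symm)
              rcases (edge_iff z hz v₀ r).mp he2 with ⟨h1', _⟩ | ⟨h1', _⟩
              · exact absurd h1' hv
              · exact Or.inr h1'
        have key : ∀ r ∈ pim α, (w (φ r) = z ↔ ¬ (r = z)) := by
          intro r hr
          rw [hwz _ (hφmem r hr), hb0]
          constructor
          · intro hsome hrz
            have h1' : φ r = v₀ := Option.some_injective _ hsome.symm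
            have h2' : φ r = z := (hφz r hr).mpr hrz
            rw [h1'] at h2'
            exact hv h2'
          · intro hrnz
            have hφrz : φ r ≠ z := fun hh => hrnz ((hφz r hr).mp hh)
            rcases hBsub _ (hφmem r hr) with h1' | h1'
            · rw [h1']
            · exact absurd h1' hφrz
        rw [edge_iff z hz p q, edge_iff z hz (w (φ p)) (w (φ q))]
        exact xor_congr_neg (key p hp) (key q hq)
    have hhspec : ∀ u c, hmap u = some c → u ∈ pim β ∧ c = φi u := by
      intro u c hu
      by_cases hub : u ∈ pim β
      · rw [hmsome u hub] at hu
        exact ⟨hub, (Option.some_injective _ hu).symm⟩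
      · rw [hmnone u hub] at hu
        exact nomatch hu
    have hhM : hmap ∈ M := by
      refine strong_mem hM ?_ ?_
      · intro u v c hu hv
        obtain ⟨hub, hcu⟩ := hhspec u c hu
        obtain ⟨hvb, hcv⟩ := hhspec v c hv
        have hφφ : φ (φi u) = φ (φi v) := by rw [← hcu, ← hcv]
        rw [(hφiA u hub).2.1, (hφiA v hvb).2.1] at hφφ
        exact hφφ
      · intro u v c d hu hv
        obtain ⟨hub, hcu⟩ := hhspec u c hu
        obtain ⟨hvb, hcv⟩ := hhspec v d hv
        subst hcu; subst hcv
        rw [edge_iff z hz u v, edge_iff z hz (φi u) (φi v)]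
        exact xor_congr ((hφiA u hub).2.2) ((hφiA v hvb).2.2)
    have hgM : pmul α t ∈ M := by
      rcases hM with rfl | rfl | rfl | rfl | rfl
      · intro u v c d hu hv
        obtain ⟨p, hup, hp, rfl⟩ := hgchain u c hu
        obtain ⟨q, hvq, hq, rfl⟩ := hgchain v d hv
        by_cases hdz : z ∈ pdom α
        · rw [hα u v p q hup hvq]
          exact htz hdz p hp q hq
        · have huz : u ≠ z := fun hh => hdz (hdz_of hup hh)
          have hvz : v ≠ z := fun hh => hdz (hdz_of hvq hh)
          refine iff_of_false ?_ ?_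
          · intro he
            rcases (edge_iff z hz u v).mp he with ⟨h1', _⟩ | ⟨h1', _⟩
            · exact huz h1'
            · exact hvz h1'
          · intro he
            rcases (edge_iff z hz _ _).mp he with ⟨h1', _⟩ | ⟨h1', _⟩
            · exact hbnotz hdz p hp h1'
            · exact hbnotz hdz q hq h1'
      · intro u v c d hu hv
        obtain ⟨p, hup, hp, rfl⟩ := hgchain u c hu
        obtain ⟨q, hvq, hq, rfl⟩ := hgchain v d hv
        have hne_iff : ¬ w (φ p) = w (φ q) ↔ ¬ p = q :=
          not_congr ⟨hwinj p hp q hq, fun hh => by rw [hh]⟩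
        by_cases hdz : z ∈ pdom α
        · constructor
          · rintro ⟨he, hne⟩
            exact (htz hdz p hp q hq).mp ((hα u v p q hup hvq).mp ⟨he, hne_iff.mp hne⟩)
          · intro he
            have hepq := (htz hdz p hp q hq).mpr he
            have hres := (hα u v p q hup hvq).mpr hepq
            exact ⟨hres.1, hne_iff.mpr hres.2⟩
        · have huz : u ≠ z := fun hh => hdz (hdz_of hup hh)
          have hvz : v ≠ z := fun hh => hdz (hdz_of hvq hh)
          refine iff_of_false ?_ ?_
          · rintro ⟨he, _⟩
            rcases (edge_iff z hz u v).mp he with ⟨h1', _⟩ | ⟨h1', _⟩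
            · exact huz h1'
            · exact hvz h1'
          · intro he
            rcases (edge_iff z hz _ _).mp he with ⟨h1', _⟩ | ⟨h1', _⟩
            · exact hbnotz hdz p hp h1'
            · exact hbnotz hdz q hq h1'
      · refine ⟨?_, ?_⟩
        · intro u v c hu hv
          obtain ⟨p, hup, hp, hcp⟩ := hgchain u c hu
          obtain ⟨q, hvq, hq, hcq⟩ := hgchain v c hv
          have hpq : p = q := hwinj p hp q hq (by rw [← hcp, ← hcq])
          exact hα.1 u v p hup (hpq ▸ hvq)
        · intro u v c d hu hv he
          obtain ⟨p, hup, hp, rfl⟩ := hgchain u c hu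
          obtain ⟨q, hvq, hq, rfl⟩ := hgchain v d hv
          have hdz : z ∈ pdom α := by
            rcases (edge_iff z hz u v).mp he with ⟨h1', _⟩ | ⟨h1', _⟩
            · exact hdz_of hup h1'
            · exact hdz_of hvq h1'
          exact (htz hdz p hp q hq).mp (hα.2 u v p q hup hvq he)
      · intro u v c d hu hv he
        obtain ⟨p, hup, hp, rfl⟩ := hgchain u c hu
        obtain ⟨q, hvq, hq, rfl⟩ := hgchain v d hv
        have hdz : z ∈ pdom α := by
          rcases (edge_iff z hz u v).mp he with ⟨h1', _⟩ | ⟨h1', _⟩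
          · exact hdz_of hup h1'
          · exact hdz_of hvq h1'
        exact (htz hdz p hp q hq).mp (hα u v p q hup hvq he)
      · intro u v c d hu hv he hne
        obtain ⟨p, hup, hp, rfl⟩ := hgchain u c hu
        obtain ⟨q, hvq, hq, rfl⟩ := hgchain v d hv
        have hdz : z ∈ pdom α := by
          rcases (edge_iff z hz u v).mp he with ⟨h1', _⟩ | ⟨h1', _⟩
          · exact hdz_of hup h1'
          · exact hdz_of hvq h1'
        have hpq : p ≠ q := fun hh => hne (congrArg (fun r => w (φ r)) hh)
        exact (htz hdz p hp q hq).mp (hα u v p q hup hvq he hpq)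
    refine ⟨pmul α t, hgM, hmap, hhM, ?_⟩
    funext x
    simp only [pmul]
    rcases hax : α x with _ | p
    · rfl
    · have hp : p ∈ pim α := ⟨x, hax⟩
      have hb1 : φ p ∈ pim β := hφmem p hp
      rw [Option.bind_some, htsome p hp, Option.bind_some,
        hwb _ hb1, Option.bind_some, hmsome (φ p) hb1,
        hφi p hp]

theorem stmt17 (n : ℕ) (hn : 1 ≤ n) (M : Set (Fin n → Option (Fin n)))
    (hM : M = PsEndS n ∨ M = PswEndS n ∨ M = IEndS n ∨ M = PEndS n ∨ M = PwEndS n)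
    (α β : Fin n → Option (Fin n)) (hα : α ∈ M) (hβ : β ∈ M) :
    GreenJ M α β ↔
      (((pim α).ncard = (pim β).ncard ∧ (pim α).ncard ≤ 1)
        ∨ ((pim α).ncard = (pim β).ncard ∧ 2 ≤ (pim α).ncard
            ∧ ((⟨0, hn⟩ : Fin n) ∈ pdom α ↔ (⟨0, hn⟩ : Fin n) ∈ pdom β)
            ∧ ((⟨0, hn⟩ : Fin n) ∈ pim α ↔ (⟨0, hn⟩ : Fin n) ∈ pim β))) := by
  classical
  constructor
  · intro hJ
    obtain ⟨g, hg, h, hh, heq⟩ := hJ.1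
    obtain ⟨g', hg', h', hh', heq'⟩ := hJ.2
    have hle1 := prank_le heq
    have hle2 := prank_le heq'
    have hcard : (pim α).ncard = (pim β).ncard := le_antisymm hle1 hle2
    by_cases h2 : 2 ≤ (pim α).ncard
    · right
      refine ⟨hcard, h2, ⟨?_, ?_⟩, ⟨?_, ?_⟩⟩
      · intro hdz
        exact F_dom ⟨0, hn⟩ rfl (pw_of_mem hM hg) heq h2 hdz
      · intro hdz
        exact F_dom ⟨0, hn⟩ rfl (pw_of_mem hM hg') heq' (hcard ▸ h2) hdz
      · intro hza
        exact F_im ⟨0, hn⟩ rfl (pw_of_mem hM hh') heq' (le_of_eq hcard) (hcard ▸ h2) hza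
      · intro hzb
        exact F_im ⟨0, hn⟩ rfl (pw_of_mem hM hh) heq (le_of_eq hcard.symm) h2 hzb
    · left
      exact ⟨hcard, by omega⟩
  · intro hcond
    have hcards : (pim α).ncard = (pim β).ncard := by
      rcases hcond with ⟨h1, _⟩ | ⟨h1, _⟩ <;> exact h1
    have hflag1 : 2 ≤ (pim α).ncard →
        (((⟨0, hn⟩ : Fin n) ∈ pdom α ↔ (⟨0, hn⟩ : Fin n) ∈ pdom β)
          ∧ ((⟨0, hn⟩ : Fin n) ∈ pim α ↔ (⟨0, hn⟩ : Fin n) ∈ pim β)) := by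
      intro h2
      rcases hcond with ⟨_, h1⟩ | ⟨_, _, hd, hi⟩
      · omega
      · exact ⟨hd, hi⟩
    refine ⟨construct17 ⟨0, hn⟩ rfl hM hα hβ hcards hflag1, ?_⟩
    refine construct17 ⟨0, hn⟩ rfl hM hβ hα hcards.symm ?_
    intro h2
    obtain ⟨hd, hi⟩ := hflag1 (by omega)
    exact ⟨hd.symm, hi.symm⟩
end

section
/- Let n ≥ 1, let S_n be the star graph on vertices {0,1,...,n-1}, and let M be PsEnd(S_n) or PswEnd(S_n). For α, β ∈ M, α J β in M if and only if |im(α)| = |im(β)| and, in case |im(α)| ≥ 2, additionally 0 ∈ dom(α) iff 0 ∈ dom(β). -/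
namespace Star18

lemma edge_def {n : ℕ} (u v : Fin n) :
    edge u v ↔ ((u.val = 0 ∧ v.val ≠ 0) ∨ (v.val = 0 ∧ u.val ≠ 0)) := Iff.rfl

lemma ps_psw {n : ℕ} {γ : Fin n → Option (Fin n)} (h : IsPsEnd γ) : IsPswEnd γ := by
  intro u v a b hu hv
  have h1 := h u v a b hu hv
  constructor
  · rintro ⟨he, _⟩; exact h1.1 he
  · intro he
    refine ⟨h1.2 he, ?_⟩
    rintro rfl
    rcases he with ⟨e1, e2⟩ | ⟨e1, e2⟩ <;> exact e2 e1

lemma psw_of_mem {n : ℕ} {M : Set (Fin n → Option (Fin n))}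
    (hM : M = PsEndS n ∨ M = PswEndS n) {γ : Fin n → Option (Fin n)} (hγ : γ ∈ M) :
    IsPswEnd γ := by
  rcases hM with rfl | rfl
  · exact ps_psw hγ
  · exact hγ

lemma mem_of_ps {n : ℕ} {M : Set (Fin n → Option (Fin n))}
    (hM : M = PsEndS n ∨ M = PswEndS n) {γ : Fin n → Option (Fin n)} (hγ : IsPsEnd γ) :
    γ ∈ M := by
  rcases hM with rfl | rfl
  · exact hγ
  · exact ps_psw hγ

lemma zero_iff_psEnd {n : ℕ} {γ : Fin n → Option (Fin n)}
    (H : ∀ u a, γ u = some a → (u.val = 0 ↔ a.val = 0)) : IsPsEnd γ := by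
  intro u v a b hu hv
  have h1 := H u a hu
  have h2 := H v b hv
  unfold edge
  omega

lemma zero_swap_psEnd {n : ℕ} {γ : Fin n → Option (Fin n)}
    (H : ∀ u a, γ u = some a → (u.val = 0 ↔ a.val ≠ 0)) : IsPsEnd γ := by
  intro u v a b hu hv
  have h1 := H u a hu
  have h2 := H v b hv
  unfold edge
  omega

lemma rank_le {n : ℕ} {α β g h : Fin n → Option (Fin n)}
    (he : α = pmul (pmul g β) h) : (pim α).ncard ≤ (pim β).ncard := by
  classical
  set f : Fin n → Fin n := fun y =>
    if hy : ∃ w, w ∈ pim β ∧ h w = some y then hy.choose else y with hf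
  have key : ∀ y ∈ pim α, ∃ w, w ∈ pim β ∧ h w = some y := by
    rintro y ⟨x, hx⟩
    rw [he] at hx
    have hx' : ((g x).bind β).bind h = some y := hx
    rw [Option.bind_eq_some_iff] at hx'
    obtain ⟨w, hw1, hw2⟩ := hx'
    rw [Option.bind_eq_some_iff] at hw1
    obtain ⟨z, hz1, hz2⟩ := hw1
    exact ⟨w, ⟨z, hz2⟩, hw2⟩
  refine Set.ncard_le_ncard_of_injOn f ?_ ?_ (Set.toFinite _)
  · intro y hy
    rw [hf]
    simp only [key y hy, dif_pos]
    exact ((key y hy).choose_spec).1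
  · intro y hy y' hy' hyy
    have s1 : h (f y) = some y := by
      rw [hf]; simp only [key y hy, dif_pos]; exact ((key y hy).choose_spec).2
    have s2 : h (f y') = some y' := by
      rw [hf]; simp only [key y' hy', dif_pos]; exact ((key y' hy').choose_spec).2
    rw [hyy, s2] at s1
    exact (Option.some_inj.1 s1).symm

end Star18

namespace Star18

lemma nz {n : ℕ} (hn : 1 ≤ n) {β : Fin n → Option (Fin n)} (hpsw : IsPswEnd β)
    (hr : 2 ≤ (pim β).ncard) (h0 : (⟨0, hn⟩ : Fin n) ∉ pdom β) :
    ∀ t ∈ pim β, t.val ≠ 0 := by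
  rintro t ⟨x, hx⟩ ht0
  obtain ⟨s, hs, hst⟩ := Set.exists_ne_of_one_lt_ncard (show 1 < (pim β).ncard by omega) t
  obtain ⟨y, hy⟩ := hs
  have hx0 : x.val ≠ 0 := by
    intro h; apply h0; have : x = ⟨0, hn⟩ := Fin.ext h
    rw [← this]; simp [pdom, hx]
  have hy0 : y.val ≠ 0 := by
    intro h; apply h0; have : y = ⟨0, hn⟩ := Fin.ext h
    rw [← this]; simp [pdom, hy]
  have hs0 : s.val ≠ 0 := by
    intro h; exact hst (Fin.ext (by omega))
  have := (hpsw x y t s hx hy).2 (by unfold edge; omega)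
  rcases this.1 with ⟨e1, e2⟩ | ⟨e1, e2⟩ <;> omega

lemma classify {n : ℕ} (hn : 1 ≤ n) {α : Fin n → Option (Fin n)} (hpsw : IsPswEnd α)
    (hr : 2 ≤ (pim α).ncard) {c : Fin n} (h0 : α ⟨0, hn⟩ = some c) :
    (∀ u t, α u = some t → (u.val = 0 ↔ t.val = 0)) ∨
      (c.val ≠ 0 ∧ ∀ u t, α u = some t → u.val ≠ 0 → t.val = 0) := by
  by_cases hc : c.val = 0
  · left
    intro u t hut
    constructor
    · intro hu0
      have : u = ⟨0, hn⟩ := Fin.ext hu0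
      rw [this, h0] at hut
      rw [← Option.some_inj.1 hut]; exact hc
    · intro ht0
      by_contra hu0
      obtain ⟨s, hs, hsc⟩ := Set.exists_ne_of_one_lt_ncard (show 1 < (pim α).ncard by omega) c
      obtain ⟨y, hy⟩ := hs
      have hs0 : s.val ≠ 0 := by
        intro h; exact hsc (Fin.ext (by omega))
      have hy0 : y.val ≠ 0 := by
        intro h
        have : y = ⟨0, hn⟩ := Fin.ext h
        rw [this, h0] at hy
        exact hs0 (by rw [← Option.some_inj.1 hy]; exact hc)
      have := ((hpsw u y t s hut hy).2 (Or.inl ⟨ht0, hs0⟩)).1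
      rcases this with ⟨e1, e2⟩ | ⟨e1, e2⟩ <;> omega
  · right
    refine ⟨hc, ?_⟩
    intro u t hut hu0
    by_contra ht0
    -- first, t = c
    have htc : t = c := by
      by_contra htc
      have := (hpsw ⟨0, hn⟩ u c t h0 hut).1 ⟨Or.inl ⟨rfl, hu0⟩, fun h => htc h.symm⟩
      rcases this with ⟨e1, e2⟩ | ⟨e1, e2⟩ <;> omega
    subst htc
    -- a second image value s ≠ t
    obtain ⟨s, hs, hsc⟩ := Set.exists_ne_of_one_lt_ncard (show 1 < (pim α).ncard by omega) t
    obtain ⟨y, hy⟩ := hs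
    have hy0 : y.val ≠ 0 := by
      intro h
      have : y = ⟨0, hn⟩ := Fin.ext h
      rw [this, h0] at hy
      exact hsc (Option.some_inj.1 hy).symm
    by_cases hs0 : s.val = 0
    · -- leaf y maps to 0, leaf u maps to c : edge c s but no edge u y
      have := ((hpsw u y t s hut hy).2 (Or.inr ⟨hs0, ht0⟩)).1
      rcases this with ⟨e1, e2⟩ | ⟨e1, e2⟩ <;> omega
    · -- s is a second leaf value: edge from (0,y)
      have := (hpsw ⟨0, hn⟩ y t s h0 hy).1 ⟨Or.inl ⟨rfl, hy0⟩, fun h => hsc h.symm⟩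
      rcases this with ⟨e1, e2⟩ | ⟨e1, e2⟩ <;> omega

lemma dom0 {n : ℕ} (hn : 1 ≤ n) {α β g h : Fin n → Option (Fin n)}
    (hαw : IsPswEnd α) (hβw : IsPswEnd β) (hhw : IsPswEnd h)
    (hrα : 2 ≤ (pim α).ncard) (hrβ : 2 ≤ (pim β).ncard)
    (he : α = pmul (pmul g β) h) (h0 : (⟨0, hn⟩ : Fin n) ∈ pdom α) :
    (⟨0, hn⟩ : Fin n) ∈ pdom β := by
  by_contra hβ0
  have hnz := nz hn hβw hrβ hβ0
  obtain ⟨c, hc⟩ : ∃ c, α ⟨0, hn⟩ = some c := by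
    cases hα0 : α ⟨0, hn⟩ with
    | none => exact absurd hα0 h0
    | some c => exact ⟨c, rfl⟩
  obtain ⟨t, ht, htc⟩ := Set.exists_ne_of_one_lt_ncard (show 1 < (pim α).ncard by omega) c
  obtain ⟨u, hu⟩ := ht
  have hu0 : u.val ≠ 0 := by
    intro hval
    have : u = ⟨0, hn⟩ := Fin.ext hval
    rw [this, hc] at hu
    exact htc (Option.some_inj.1 hu).symm
  -- edge c t : from α strong-weak at (0, u)
  have hect : edge c t := (hαw ⟨0, hn⟩ u c t hc hu).1 ⟨Or.inl ⟨rfl, hu0⟩, fun hh => htc hh.symm⟩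
  -- decompose the products
  have key : ∀ x y, α x = some y → ∃ w, w ∈ pim β ∧ h w = some y := by
    intro x y hx
    rw [he] at hx
    have hx' : ((g x).bind β).bind h = some y := hx
    rw [Option.bind_eq_some_iff] at hx'
    obtain ⟨w, hw1, hw2⟩ := hx'
    rw [Option.bind_eq_some_iff] at hw1
    obtain ⟨z, hz1, hz2⟩ := hw1
    exact ⟨w, ⟨z, hz2⟩, hw2⟩
  obtain ⟨a, haβ, hac⟩ := key _ _ hc
  obtain ⟨b, hbβ, hbt⟩ := key _ _ hu
  have ha0 := hnz a haβ
  have hb0 := hnz b hbβ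
  have hab : a ≠ b := by
    rintro rfl
    rw [hac] at hbt
    exact htc (Option.some_inj.1 hbt).symm
  have := ((hhw a b c t hac hbt).2 hect).1
  rcases this with ⟨e1, e2⟩ | ⟨e1, e2⟩ <;> omega

end Star18

namespace Star18

lemma construct_eq {n : ℕ} (α β : Fin n → Option (Fin n))
    (k h : Fin n → Option (Fin n))
    (H : ∀ u t, α u = some t → ((k t).bind β).bind h = some t) :
    α = pmul (pmul (fun u => (α u).bind k) β) h := by
  funext u
  show α u = (((α u).bind k).bind β).bind h
  cases hu : α u with
  | none => rfl
  | some t => exact (H u t hu).symm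

lemma g_form_some {n : ℕ} {α k : Fin n → Option (Fin n)} {u a : Fin n}
    (h : (fun u => (α u).bind k) u = some a) : ∃ t, α u = some t ∧ k t = some a := by
  simpa [Option.bind_eq_some_iff] using h

lemma mainConstruct {n : ℕ} (hn : 1 ≤ n) (α β : Fin n → Option (Fin n))
    (H1 : ∀ u t, α u = some t → (u.val = 0 ↔ t.val = 0))
    (H2 : ∀ u t, β u = some t → (u.val = 0 ↔ t.val = 0))
    (hcard : {t | t ∈ pim α ∧ t.val ≠ 0}.ncard = {t | t ∈ pim β ∧ t.val ≠ 0}.ncard)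
    (hdom : (⟨0, hn⟩ : Fin n) ∈ pdom α → (⟨0, hn⟩ : Fin n) ∈ pdom β) :
    ∃ g h, IsPsEnd g ∧ IsPsEnd h ∧ α = pmul (pmul g β) h := by
  classical
  set S : Set (Fin n) := {t | t ∈ pim α ∧ t.val ≠ 0} with hS
  set T : Set (Fin n) := {t | t ∈ pim β ∧ t.val ≠ 0} with hT
  have hSfin : S.Finite := Set.toFinite _
  have hTfin : T.Finite := Set.toFinite _
  have hcard' : hSfin.toFinset.card = hTfin.toFinset.card := by
    rw [← Set.ncard_eq_toFinset_card, ← Set.ncard_eq_toFinset_card]; exact hcard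
  set e := Finset.equivOfCardEq hcard' with he
  set φ : Fin n → Fin n := fun t =>
    if ht : t ∈ S then (e ⟨t, hSfin.mem_toFinset.2 ht⟩ : Fin n) else t with hφ
  set ψ : Fin n → Fin n := fun s =>
    if hs : s ∈ T then (e.symm ⟨s, hTfin.mem_toFinset.2 hs⟩ : Fin n) else s with hψ
  have hφT : ∀ t, t ∈ S → φ t ∈ T := by
    intro t ht
    rw [hφ]; simp only [ht, dif_pos]
    exact hTfin.mem_toFinset.1 (e ⟨t, hSfin.mem_toFinset.2 ht⟩).2
  have hψS : ∀ s, s ∈ T → ψ s ∈ S := by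
    intro s hs
    rw [hψ]; simp only [hs, dif_pos]
    exact hSfin.mem_toFinset.1 (e.symm ⟨s, hTfin.mem_toFinset.2 hs⟩).2
  have hψφ : ∀ t, t ∈ S → ψ (φ t) = t := by
    intro t ht
    have hφt := hφT t ht
    have h1 : φ t = (e ⟨t, hSfin.mem_toFinset.2 ht⟩ : Fin n) := by
      simp only [hφ]; rw [dif_pos ht]
    have h2 : ψ (φ t) = (e.symm ⟨φ t, hTfin.mem_toFinset.2 hφt⟩ : Fin n) := by
      simp only [hψ]; rw [dif_pos hφt]
    have h3 : (⟨φ t, hTfin.mem_toFinset.2 hφt⟩ : {x // x ∈ hTfin.toFinset}) =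
        e ⟨t, hSfin.mem_toFinset.2 ht⟩ := Subtype.ext h1
    rw [h2, h3, Equiv.symm_apply_apply]
  set σ : Fin n → Fin n := fun s => if hs : s ∈ pim β then hs.choose else ⟨0, hn⟩ with hσ
  have hσβ : ∀ s, s ∈ pim β → β (σ s) = some s := by
    intro s hs
    rw [hσ]; simp only [hs, dif_pos]
    exact hs.choose_spec
  have hσ0 : ∀ s, s ∈ T → (σ s).val ≠ 0 := by
    intro s hs h0
    exact hs.2 ((H2 (σ s) s (hσβ s hs.1)).1 h0)
  set k : Fin n → Option (Fin n) := fun t =>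
    if t.val = 0 then some ⟨0, hn⟩ else some (σ (φ t)) with hk
  set g : Fin n → Option (Fin n) := fun u => (α u).bind k with hg
  set h : Fin n → Option (Fin n) := fun s =>
    if s.val = 0 then some ⟨0, hn⟩ else if s ∈ T then some (ψ s) else none with hh
  refine ⟨g, h, ?_, ?_, ?_⟩
  · apply zero_iff_psEnd
    intro u a hu
    obtain ⟨t, ht, hkt⟩ := g_form_some hu
    have h1 := H1 u t ht
    simp only [hk] at hkt
    by_cases ht0 : t.val = 0
    · rw [if_pos ht0] at hkt
      have : a = ⟨0, hn⟩ := (Option.some_inj.1 hkt).symm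
      subst this
      exact iff_of_true (h1.2 ht0) rfl
    · rw [if_neg ht0] at hkt
      have : a = σ (φ t) := (Option.some_inj.1 hkt).symm
      subst this
      have htS : t ∈ S := ⟨⟨u, ht⟩, ht0⟩
      exact iff_of_false (fun hh => ht0 (h1.1 hh)) (hσ0 (φ t) (hφT t htS))
  · apply zero_iff_psEnd
    intro s a hs
    simp only [hh] at hs
    by_cases hs0 : s.val = 0
    · rw [if_pos hs0] at hs
      have : a = ⟨0, hn⟩ := (Option.some_inj.1 hs).symm
      subst this
      exact iff_of_true hs0 rfl
    · rw [if_neg hs0] at hs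
      by_cases hsT : s ∈ T
      · rw [if_pos hsT] at hs
        have : a = ψ s := (Option.some_inj.1 hs).symm
        subst this
        exact iff_of_false hs0 (hψS s hsT).2
      · rw [if_neg hsT] at hs; exact absurd hs (by simp)
  · rw [hg]
    apply construct_eq
    intro u t hut
    rw [hk]
    by_cases ht0 : t.val = 0
    · simp only [ht0, if_pos]
      have hu0 : u.val = 0 := (H1 u t hut).2 ht0
      have : u = ⟨0, hn⟩ := Fin.ext hu0
      subst this
      have h0α : (⟨0, hn⟩ : Fin n) ∈ pdom α := by
        simp [pdom, hut]
      obtain ⟨w, hw⟩ : ∃ w, β ⟨0, hn⟩ = some w := by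
        have := hdom h0α
        cases hb : β ⟨0, hn⟩ with
        | none => exact absurd hb this
        | some w => exact ⟨w, rfl⟩
      have hw0 : w.val = 0 := (H2 ⟨0, hn⟩ w hw).1 rfl
      have hwz : w = ⟨0, hn⟩ := Fin.ext hw0
      subst hwz
      have ht' : t = ⟨0, hn⟩ := Fin.ext ht0
      subst ht'
      show (β ⟨0, hn⟩).bind h = some ⟨0, hn⟩
      rw [hw]
      show h ⟨0, hn⟩ = some ⟨0, hn⟩
      simp [hh]
    · simp only [ht0, if_neg, if_false]
      have htS : t ∈ S := ⟨⟨u, hut⟩, ht0⟩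
      have hφt := hφT t htS
      show (β (σ (φ t))).bind h = some t
      rw [hσβ (φ t) hφt.1]
      show h (φ t) = some t
      simp only [hh]
      rw [if_neg hφt.2, if_pos hφt, hψφ t htS]
  
end Star18

namespace Star18

lemma no_loop {n : ℕ} (x : Fin n) : ¬ edge x x := by unfold edge; omega

lemma some_of_pdom {n : ℕ} {γ : Fin n → Option (Fin n)} {x : Fin n}
    (h : x ∈ pdom γ) : ∃ t, γ x = some t := Option.ne_none_iff_exists'.1 h

lemma twoPoint_prop {n : ℕ} {z w d : Fin n} {s x : Fin n}
    (hs : (if s.val = 0 then some z else if s = d then some w else none) = some x) :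
    (s.val = 0 ∧ x = z) ∨ (s.val ≠ 0 ∧ s = d ∧ x = w) := by
  by_cases hs0 : s.val = 0
  · rw [if_pos hs0] at hs; exact Or.inl ⟨hs0, (Option.some_inj.1 hs).symm⟩
  · rw [if_neg hs0] at hs
    by_cases hsd : s = d
    · rw [if_pos hsd] at hs; exact Or.inr ⟨hs0, hsd, (Option.some_inj.1 hs).symm⟩
    · rw [if_neg hsd] at hs; exact absurd hs (by simp)

lemma leaf_card {n : ℕ} (hn : 1 ≤ n) (γ : Fin n → Option (Fin n))
    (H : ∀ u t, γ u = some t → (u.val = 0 ↔ t.val = 0))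
    (h0 : (⟨0, hn⟩ : Fin n) ∈ pdom γ) :
    (pim γ).ncard = {t | t ∈ pim γ ∧ t.val ≠ 0}.ncard + 1 := by
  obtain ⟨w, hw⟩ := some_of_pdom h0
  have hw0 : w = ⟨0, hn⟩ := Fin.ext ((H _ _ hw).1 rfl)
  subst hw0
  have hins : pim γ = insert ⟨0, hn⟩ {t | t ∈ pim γ ∧ t.val ≠ 0} := by
    ext t
    constructor
    · intro ht
      by_cases ht0 : t.val = 0
      · exact Set.mem_insert_iff.2 (Or.inl (Fin.ext ht0))
      · exact Set.mem_insert_iff.2 (Or.inr ⟨ht, ht0⟩)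
    · intro ht
      rcases Set.mem_insert_iff.1 ht with rfl | ⟨h1, _⟩
      · exact ⟨⟨0, hn⟩, hw⟩
      · exact h1
  conv_lhs => rw [hins]
  rw [Set.ncard_insert_of_notMem (fun h => h.2 rfl)]

lemma typeB_card {n : ℕ} (hn : 1 ≤ n) {β : Fin n → Option (Fin n)} {c' : Fin n}
    (hc' : β ⟨0, hn⟩ = some c')
    (HB : ∀ u t, β u = some t → u.val ≠ 0 → t.val = 0) :
    (pim β).ncard ≤ 2 := by
  have hsub : pim β ⊆ {⟨0, hn⟩, c'} := by
    rintro t ⟨y, hy⟩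
    by_cases hy0 : y.val = 0
    · have hye : y = ⟨0, hn⟩ := Fin.ext hy0
      rw [hye, hc'] at hy
      exact Set.mem_insert_iff.2 (Or.inr (Set.mem_singleton_iff.2 (Option.some_inj.1 hy).symm))
    · exact Set.mem_insert_iff.2 (Or.inl (Fin.ext (HB y t hy hy0)))
  calc (pim β).ncard ≤ ({⟨0, hn⟩, c'} : Set (Fin n)).ncard :=
        Set.ncard_le_ncard hsub (Set.toFinite _)
    _ ≤ 2 := by
        have h2 := Set.ncard_insert_le (⟨0, hn⟩ : Fin n) ({c'} : Set (Fin n))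
        have h1 : ({c'} : Set (Fin n)).ncard = 1 := Set.ncard_singleton c'
        omega

lemma typeB_facts {n : ℕ} (hn : 1 ≤ n) {β : Fin n → Option (Fin n)} {c' : Fin n}
    (hc' : β ⟨0, hn⟩ = some c') (hc0' : c'.val ≠ 0)
    (HB : ∀ u t, β u = some t → u.val ≠ 0 → t.val = 0)
    (hr : 2 ≤ (pim β).ncard) :
    ∃ v0 : Fin n, v0.val ≠ 0 ∧ β v0 = some ⟨0, hn⟩ := by
  have hmem : (⟨0, hn⟩ : Fin n) ∈ pim β := by
    by_contra hno
    have hsub : pim β ⊆ {c'} := by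
      rintro t ⟨y, hy⟩
      by_cases hy0 : y.val = 0
      · have hye : y = ⟨0, hn⟩ := Fin.ext hy0
        rw [hye, hc'] at hy
        exact Set.mem_singleton_iff.2 (Option.some_inj.1 hy).symm
      · have ht0 := HB y t hy hy0
        have hte : t = ⟨0, hn⟩ := Fin.ext ht0
        rw [hte] at hy
        exact absurd ⟨y, hy⟩ hno
    have := Set.ncard_le_ncard hsub (Set.toFinite _)
    rw [Set.ncard_singleton] at this
    omega
  obtain ⟨v0, hv0⟩ := hmem
  refine ⟨v0, ?_, hv0⟩
  intro h
  have hve : v0 = ⟨0, hn⟩ := Fin.ext h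
  rw [hve, hc'] at hv0
  exact hc0' (by rw [Option.some_inj.1 hv0])

lemma typeA_rank2 {n : ℕ} (hn : 1 ≤ n) {α : Fin n → Option (Fin n)} {c : Fin n}
    (HA : ∀ u t, α u = some t → (u.val = 0 ↔ t.val = 0))
    (hc : α ⟨0, hn⟩ = some c) (hr2 : (pim α).ncard = 2) :
    ∃ t : Fin n, t.val ≠ 0 ∧ ∀ u s, α u = some s → u.val ≠ 0 → s = t := by
  have hce : c = ⟨0, hn⟩ := Fin.ext ((HA _ _ hc).1 rfl)
  subst hce
  obtain ⟨t, htm, htne⟩ := Set.exists_ne_of_one_lt_ncard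
    (show 1 < (pim α).ncard by omega) ⟨0, hn⟩
  have ht0 : t.val ≠ 0 := fun h => htne (Fin.ext h)
  have heq : ({⟨0, hn⟩, t} : Set (Fin n)) = pim α := by
    apply Set.eq_of_subset_of_ncard_le
    · rintro s hs
      rcases Set.mem_insert_iff.1 hs with rfl | hs'
      · exact ⟨⟨0, hn⟩, hc⟩
      · rw [Set.mem_singleton_iff.1 hs']; exact htm
    · rw [hr2, Set.ncard_pair (Ne.symm htne)]
    · exact Set.toFinite _
  refine ⟨t, ht0, ?_⟩
  intro u s hus hu0
  have hs : s ∈ pim α := ⟨u, hus⟩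
  rw [← heq] at hs
  rcases Set.mem_insert_iff.1 hs with rfl | hs'
  · exact absurd ((HA u _ hus).2 rfl) hu0
  · exact Set.mem_singleton_iff.1 hs'

end Star18

namespace Star18

lemma half {n : ℕ} (hn : 1 ≤ n) {M : Set (Fin n → Option (Fin n))}
    (hM : M = PsEndS n ∨ M = PswEndS n)
    {α β : Fin n → Option (Fin n)} (hα : α ∈ M) (hβ : β ∈ M)
    (hcard : (pim α).ncard = (pim β).ncard)
    (hdom : 2 ≤ (pim α).ncard →
      ((⟨0, hn⟩ : Fin n) ∈ pdom α ↔ (⟨0, hn⟩ : Fin n) ∈ pdom β)) :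
    ∃ g ∈ M, ∃ h ∈ M, α = pmul (pmul g β) h := by
  classical
  by_cases hr0 : (pim α).ncard = 0
  · -- rank 0 : α empty
    have hemp : pim α = ∅ := (Set.ncard_eq_zero (Set.toFinite _)).1 hr0
    have hnone : ∀ u, α u = none := by
      intro u
      cases hu : α u with
      | none => rfl
      | some t =>
          have : t ∈ pim α := ⟨u, hu⟩
          rw [hemp] at this
          exact absurd this (Set.notMem_empty t)
    have hzM : (fun _ : Fin n => (none : Option (Fin n))) ∈ M :=
      mem_of_ps hM (fun u v a b hu _ => absurd hu (by simp))
    refine ⟨_, hzM, _, hzM, ?_⟩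
    funext u
    rw [hnone u]; rfl
  by_cases hr1 : (pim α).ncard = 1
  · -- rank 1 : constant maps
    obtain ⟨a, ha⟩ := Set.ncard_eq_one.1 hr1
    obtain ⟨b, hb⟩ := Set.ncard_eq_one.1 (by rw [← hcard]; exact hr1)
    have hbmem : b ∈ pim β := by rw [hb]; rfl
    obtain ⟨x0, hx0⟩ := hbmem
    have hconstα : ∀ u t, α u = some t → t = a := by
      intro u t hu
      have : t ∈ pim α := ⟨u, hu⟩
      rw [ha] at this
      exact this
    set h : Fin n → Option (Fin n) := fun s => if s = b then some a else none with hh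
    have hhPs : IsPsEnd h := by
      intro u v a' b' hu hv
      simp only [hh] at hu hv
      by_cases hub : u = b
      · rw [if_pos hub] at hu
        by_cases hvb : v = b
        · rw [if_pos hvb] at hv
          obtain rfl := Option.some_inj.1 hu
          obtain rfl := Option.some_inj.1 hv
          subst hub; subst hvb
          exact iff_of_false (no_loop _) (no_loop _)
        · rw [if_neg hvb] at hv; exact absurd hv (by simp)
      · rw [if_neg hub] at hu; exact absurd hu (by simp)
    set k : Fin n → Option (Fin n) := fun _ => some x0 with hk
    set g : Fin n → Option (Fin n) := fun u => (α u).bind k with hg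
    have hgM : g ∈ M := by
      rcases hM with rfl | rfl
      · intro u v w1 w2 hu hv
        obtain ⟨t1, ht1, hk1⟩ := g_form_some hu
        obtain ⟨t2, ht2, hk2⟩ := g_form_some hv
        obtain rfl := Option.some_inj.1 hk1
        obtain rfl := Option.some_inj.1 hk2
        have h1 := hα u v t1 t2 ht1 ht2
        rw [hconstα u t1 ht1, hconstα v t2 ht2] at h1
        exact iff_of_false (fun he => no_loop _ (h1.1 he)) (no_loop _)
      · intro u v w1 w2 hu hv
        obtain ⟨t1, ht1, hk1⟩ := g_form_some hu
        obtain ⟨t2, ht2, hk2⟩ := g_form_some hv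
        obtain rfl := Option.some_inj.1 hk1
        obtain rfl := Option.some_inj.1 hk2
        exact iff_of_false (fun he => he.2 rfl) (no_loop _)
    refine ⟨g, hgM, h, mem_of_ps hM hhPs, ?_⟩
    rw [hg]; apply construct_eq
    intro u t hut
    obtain rfl := hconstα u t hut
    show (β x0).bind h = some t
    rw [hx0]
    show h b = some t
    simp [hh]
  -- rank ≥ 2
  have h2 : 2 ≤ (pim α).ncard := by omega
  have h2β : 2 ≤ (pim β).ncard := by omega
  have hd := hdom h2
  have hαw : IsPswEnd α := psw_of_mem hM hα
  have hβw : IsPswEnd β := psw_of_mem hM hβ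
  by_cases hz : (⟨0, hn⟩ : Fin n) ∈ pdom α
  · have hzβ : (⟨0, hn⟩ : Fin n) ∈ pdom β := hd.1 hz
    obtain ⟨c, hc⟩ := some_of_pdom hz
    obtain ⟨c', hc'⟩ := some_of_pdom hzβ
    rcases classify hn hαw h2 hc with HA | ⟨hc0, HB⟩
    · rcases classify hn hβw h2β hc' with HA' | ⟨hc0', HB'⟩
      · -- case A-A : mainConstruct
        obtain ⟨g, h, hg, hh, he⟩ := mainConstruct hn α β HA HA'
          (by
            have e1 := leaf_card hn α HA hz
            have e2 := leaf_card hn β HA' hzβ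
            omega)
          (fun _ => hzβ)
        exact ⟨g, mem_of_ps hM hg, h, mem_of_ps hM hh, he⟩
      · -- case A-B
        have hr2β : (pim β).ncard = 2 := le_antisymm (typeB_card hn hc' HB') h2β
        have hr2α : (pim α).ncard = 2 := by omega
        obtain ⟨v0, hv00, hv0⟩ := typeB_facts hn hc' hc0' HB' h2β
        obtain ⟨t, ht0, hconst⟩ := typeA_rank2 hn HA hc hr2α
        set k : Fin n → Option (Fin n) :=
          fun s => if s.val = 0 then some ⟨0, hn⟩ else some v0 with hk
        set g : Fin n → Option (Fin n) := fun u => (α u).bind k with hg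
        have hgPs : IsPsEnd g := by
          apply zero_iff_psEnd
          intro u w hu
          obtain ⟨s, hs, hks⟩ := g_form_some hu
          have h1 := HA u s hs
          simp only [hk] at hks
          by_cases hs0 : s.val = 0
          · rw [if_pos hs0] at hks
            obtain rfl := Option.some_inj.1 hks
            exact iff_of_true (h1.2 hs0) rfl
          · rw [if_neg hs0] at hks
            obtain rfl := Option.some_inj.1 hks
            exact iff_of_false (fun hq => hs0 (h1.1 hq)) hv00
        set h : Fin n → Option (Fin n) :=
          fun s => if s.val = 0 then some t else if s = c' then some ⟨0, hn⟩ else none with hh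
        have hhPs : IsPsEnd h := by
          apply zero_swap_psEnd
          intro s x hs
          simp only [hh] at hs
          rcases twoPoint_prop hs with ⟨hs0, rfl⟩ | ⟨hs0, rfl, rfl⟩
          · exact iff_of_true hs0 ht0
          · exact iff_of_false hs0 (fun hx => hx rfl)
        refine ⟨g, mem_of_ps hM hgPs, h, mem_of_ps hM hhPs, ?_⟩
        rw [hg]; apply construct_eq
        intro u s hus
        by_cases hu0 : u.val = 0
        · have hs0 : s.val = 0 := (HA u s hus).1 hu0
          have hks : k s = some ⟨0, hn⟩ := by simp only [hk]; rw [if_pos hs0]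
          rw [hks]
          show (β ⟨0, hn⟩).bind h = some s
          rw [hc']
          have hse : s = ⟨0, hn⟩ := Fin.ext hs0
          subst hse
          show h c' = some ⟨0, hn⟩
          simp [hh, hc0']
        · have hst : s = t := hconst u s hus hu0
          subst hst
          have hks : k s = some v0 := by simp only [hk]; rw [if_neg ht0]
          rw [hks]
          show (β v0).bind h = some s
          rw [hv0]
          show h ⟨0, hn⟩ = some s
          simp [hh]
    · rcases classify hn hβw h2β hc' with HA' | ⟨hc0', HB'⟩
      · -- case B-A
        obtain ⟨d, hdm, hdne⟩ := Set.exists_ne_of_one_lt_ncard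
          (show 1 < (pim β).ncard by omega) ⟨0, hn⟩
        have hd0 : d.val ≠ 0 := fun h => hdne (Fin.ext h)
        obtain ⟨v0, hv0⟩ := hdm
        have hv00 : v0.val ≠ 0 := fun h => hd0 ((HA' v0 d hv0).1 h)
        have hc'0 : c'.val = 0 := (HA' _ _ hc').1 rfl
        have hc'e : c' = ⟨0, hn⟩ := Fin.ext hc'0
        subst hc'e
        set k : Fin n → Option (Fin n) :=
          fun s => if s.val = 0 then some ⟨0, hn⟩ else some v0 with hk
        set g : Fin n → Option (Fin n) := fun u => (α u).bind k with hg
        have hgPs : IsPsEnd g := by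
          apply zero_swap_psEnd
          intro u w hu
          obtain ⟨s, hs, hks⟩ := g_form_some hu
          simp only [hk] at hks
          by_cases hs0 : s.val = 0
          · rw [if_pos hs0] at hks
            obtain rfl := Option.some_inj.1 hks
            have hu0 : u.val ≠ 0 := by
              intro hq
              have hue : u = ⟨0, hn⟩ := Fin.ext hq
              rw [hue, hc] at hs
              exact hc0 (by rw [Option.some_inj.1 hs]; exact hs0)
            exact iff_of_false hu0 (fun hx => hx rfl)
          · rw [if_neg hs0] at hks
            obtain rfl := Option.some_inj.1 hks
            have hu0 : u.val = 0 := by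
              by_contra hq
              exact hs0 (HB u s hs hq)
            exact iff_of_true hu0 hv00
        set h : Fin n → Option (Fin n) :=
          fun s => if s.val = 0 then some ⟨0, hn⟩ else if s = d then some c else none with hh
        have hhPs : IsPsEnd h := by
          apply zero_iff_psEnd
          intro s x hs
          simp only [hh] at hs
          rcases twoPoint_prop hs with ⟨hs0, rfl⟩ | ⟨hs0, rfl, rfl⟩
          · exact iff_of_true hs0 rfl
          · exact iff_of_false hs0 hc0
        refine ⟨g, mem_of_ps hM hgPs, h, mem_of_ps hM hhPs, ?_⟩
        rw [hg]; apply construct_eq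
        intro u s hus
        by_cases hu0 : u.val = 0
        · have hue : u = ⟨0, hn⟩ := Fin.ext hu0
          rw [hue, hc] at hus
          obtain rfl := Option.some_inj.1 hus
          have hks : k c = some v0 := by simp only [hk]; rw [if_neg hc0]
          rw [hks]
          show (β v0).bind h = some c
          rw [hv0]
          show h d = some c
          simp [hh, hd0]
        · have hs0 : s.val = 0 := HB u s hus hu0
          have hks : k s = some ⟨0, hn⟩ := by simp only [hk]; rw [if_pos hs0]
          rw [hks]
          show (β ⟨0, hn⟩).bind h = some s
          rw [hc']
          have hse : s = ⟨0, hn⟩ := Fin.ext hs0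
          subst hse
          show h ⟨0, hn⟩ = some ⟨0, hn⟩
          simp [hh]
      · -- case B-B
        obtain ⟨v0, hv00, hv0⟩ := typeB_facts hn hc' hc0' HB' h2β
        set k : Fin n → Option (Fin n) :=
          fun s => if s.val = 0 then some v0 else some ⟨0, hn⟩ with hk
        set g : Fin n → Option (Fin n) := fun u => (α u).bind k with hg
        have hgPs : IsPsEnd g := by
          apply zero_iff_psEnd
          intro u w hu
          obtain ⟨s, hs, hks⟩ := g_form_some hu
          simp only [hk] at hks
          by_cases hs0 : s.val = 0
          · rw [if_pos hs0] at hks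
            obtain rfl := Option.some_inj.1 hks
            have hu0 : u.val ≠ 0 := by
              intro hq
              have hue : u = ⟨0, hn⟩ := Fin.ext hq
              rw [hue, hc] at hs
              exact hc0 (by rw [Option.some_inj.1 hs]; exact hs0)
            exact iff_of_false hu0 hv00
          · rw [if_neg hs0] at hks
            obtain rfl := Option.some_inj.1 hks
            have hu0 : u.val = 0 := by
              by_contra hq
              exact hs0 (HB u s hs hq)
            exact iff_of_true hu0 rfl
        set h : Fin n → Option (Fin n) :=
          fun s => if s.val = 0 then some ⟨0, hn⟩ else if s = c' then some c else none with hh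
        have hhPs : IsPsEnd h := by
          apply zero_iff_psEnd
          intro s x hs
          simp only [hh] at hs
          rcases twoPoint_prop hs with ⟨hs0, rfl⟩ | ⟨hs0, rfl, rfl⟩
          · exact iff_of_true hs0 rfl
          · exact iff_of_false hs0 hc0
        refine ⟨g, mem_of_ps hM hgPs, h, mem_of_ps hM hhPs, ?_⟩
        rw [hg]; apply construct_eq
        intro u s hus
        by_cases hu0 : u.val = 0
        · have hue : u = ⟨0, hn⟩ := Fin.ext hu0
          rw [hue, hc] at hus
          obtain rfl := Option.some_inj.1 hus
          have hks : k c = some ⟨0, hn⟩ := by simp only [hk]; rw [if_neg hc0]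
          rw [hks]
          show (β ⟨0, hn⟩).bind h = some c
          rw [hc']
          show h c' = some c
          simp [hh, hc0']
        · have hs0 : s.val = 0 := HB u s hus hu0
          have hks : k s = some v0 := by simp only [hk]; rw [if_pos hs0]
          rw [hks]
          show (β v0).bind h = some s
          rw [hv0]
          have hse : s = ⟨0, hn⟩ := Fin.ext hs0
          subst hse
          show h ⟨0, hn⟩ = some ⟨0, hn⟩
          simp [hh]
  · -- 0 not in either domain
    have hzβ : (⟨0, hn⟩ : Fin n) ∉ pdom β := fun hq => hz (hd.2 hq)
    have hnzα := nz hn hαw h2 hz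
    have hnzβ := nz hn hβw h2β hzβ
    have H1 : ∀ u t, α u = some t → (u.val = 0 ↔ t.val = 0) := by
      intro u t hut
      refine iff_of_false ?_ (hnzα t ⟨u, hut⟩)
      intro hq
      have hue : u = ⟨0, hn⟩ := Fin.ext hq
      rw [hue] at hut
      exact hz (by simp [pdom, hut])
    have H2 : ∀ u t, β u = some t → (u.val = 0 ↔ t.val = 0) := by
      intro u t hut
      refine iff_of_false ?_ (hnzβ t ⟨u, hut⟩)
      intro hq
      have hue : u = ⟨0, hn⟩ := Fin.ext hq
      rw [hue] at hut
      exact hzβ (by simp [pdom, hut])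
    have eqα : {t | t ∈ pim α ∧ t.val ≠ 0} = pim α :=
      Set.ext fun t => ⟨fun hq => hq.1, fun hq => ⟨hq, hnzα t hq⟩⟩
    have eqβ : {t | t ∈ pim β ∧ t.val ≠ 0} = pim β :=
      Set.ext fun t => ⟨fun hq => hq.1, fun hq => ⟨hq, hnzβ t hq⟩⟩
    obtain ⟨g, h, hg, hh, he⟩ := mainConstruct hn α β H1 H2
      (by rw [eqα, eqβ]; exact hcard) (fun hq => absurd hq hz)
    exact ⟨g, mem_of_ps hM hg, h, mem_of_ps hM hh, he⟩

end Star18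
theorem stmt18 (n : ℕ) (hn : 1 ≤ n) (M : Set (Fin n → Option (Fin n)))
    (hM : M = PsEndS n ∨ M = PswEndS n)
    (α β : Fin n → Option (Fin n)) (hα : α ∈ M) (hβ : β ∈ M) :
    GreenJ M α β ↔
      ((pim α).ncard = (pim β).ncard
        ∧ (2 ≤ (pim α).ncard →
            ((⟨0, hn⟩ : Fin n) ∈ pdom α ↔ (⟨0, hn⟩ : Fin n) ∈ pdom β))) := by
  constructor
  · rintro ⟨⟨g1, hg1, h1, hh1, e1⟩, ⟨g2, hg2, h2, hh2, e2⟩⟩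
    have hle1 := Star18.rank_le e1
    have hle2 := Star18.rank_le e2
    have hc : (pim α).ncard = (pim β).ncard := le_antisymm hle1 hle2
    refine ⟨hc, fun h2r => ?_⟩
    constructor
    · exact fun h0 => Star18.dom0 hn (Star18.psw_of_mem hM hα) (Star18.psw_of_mem hM hβ)
        (Star18.psw_of_mem hM hh1) h2r (hc ▸ h2r) e1 h0
    · exact fun h0 => Star18.dom0 hn (Star18.psw_of_mem hM hβ) (Star18.psw_of_mem hM hα)
        (Star18.psw_of_mem hM hh2) (hc ▸ h2r) h2r e2 h0
  · rintro ⟨hc, hd⟩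
    refine ⟨Star18.half hn hM hα hβ hc hd, Star18.half hn hM hβ hα hc.symm ?_⟩
    intro h2
    rw [← hc] at h2
    exact (hd h2).symm
end
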